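/- arXiv:1405.3206 — 2 statements merged into one kernel-verified Lean document; each statement's English description precedes it below -/
import Mathlib

section
/- Let x̄, p₁, p₂ ∈ ℝ^n, t ∈ [0,1], and p̄ = t p₁ + (1−t) p₂. If (λ₁, w₁), (λ₂, w₂), and (λ, w) are classical solutions of the critical cell problem at (x̄, p₁), (x̄, p₂), and (x̄, p̄) respectively, then λ ≤ t λ₁ + (1−t) λ₂; in other words, the effective Hamiltonian of the critical regime is convex in the momentum variable p. -/
open Matrix MeasureTheory Set

noncomputable section

/-- Euclidean norm of a vector in `ℝ^k`. -/
def en {k : ℕ} (v : Fin k → ℝ) : ℝ := Real.sqrt (v ⬝ᵥ v)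

/-- Squared Euclidean norm. -/
def sq2 {k : ℕ} (v : Fin k → ℝ) : ℝ := v ⬝ᵥ v

/-- Partial derivative in the `i`-th coordinate direction. -/
def pd {m : ℕ} (w : (Fin m → ℝ) → ℝ) (i : Fin m) (y : Fin m → ℝ) : ℝ :=
  fderiv ℝ w y (Pi.single i 1)

/-- Gradient. -/
def vgrad {m : ℕ} (w : (Fin m → ℝ) → ℝ) (y : Fin m → ℝ) : Fin m → ℝ := fun i => pd w i y

/-- Hessian matrix. -/
def vhess {m : ℕ} (w : (Fin m → ℝ) → ℝ) (y : Fin m → ℝ) : Matrix (Fin m) (Fin m) ℝ :=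
  Matrix.of fun i j => pd (pd w j) i y

/-- `ℤ^m`-periodicity. -/
def ZPer {m : ℕ} (w : (Fin m → ℝ) → ℝ) : Prop :=
  ∀ (y : Fin m → ℝ) (k : Fin m → ℤ), w (y + fun i => (k i : ℝ)) = w y

/-- Standing hypotheses on the data. -/
structure StandingHyp {n m r : ℕ}
    (σ : (Fin n → ℝ) → (Fin m → ℝ) → Matrix (Fin n) (Fin r) ℝ)
    (b : (Fin m → ℝ) → Fin m → ℝ)
    (τ : (Fin m → ℝ) → Matrix (Fin m) (Fin r) ℝ) : Prop where
  σ_bdd : ∃ C : ℝ, ∀ x y i j, |σ x y i j| ≤ C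
  σ_lip : ∃ L : ℝ, ∀ x x' y y' i j, |σ x y i j - σ x' y' i j| ≤ L * (en (x - x') + en (y - y'))
  σ_per : ∀ x y (k : Fin m → ℤ), σ x (y + fun l => (k l : ℝ)) = σ x y
  b_lip : ∃ L : ℝ, ∀ y y' i, |b y i - b y' i| ≤ L * en (y - y')
  b_per : ∀ y (k : Fin m → ℤ), b (y + fun l => (k l : ℝ)) = b y
  τ_lip : ∃ L : ℝ, ∀ y y' i j, |τ y i j - τ y' i j| ≤ L * en (y - y')
  τ_per : ∀ y (k : Fin m → ℤ), τ (y + fun l => (k l : ℝ)) = τ y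
  τ_nondeg : ∃ θ : ℝ, 0 < θ ∧ ∀ y ξ, θ * sq2 ξ ≤ sq2 ((τ y)ᵀ *ᵥ ξ)

/-- Classical solution of the critical cell problem at `(x, p)`. -/
def IsCriticalSol {n m r : ℕ}
    (σ : (Fin n → ℝ) → (Fin m → ℝ) → Matrix (Fin n) (Fin r) ℝ)
    (b : (Fin m → ℝ) → Fin m → ℝ)
    (τ : (Fin m → ℝ) → Matrix (Fin m) (Fin r) ℝ)
    (x p : Fin n → ℝ) (lam : ℝ) (w : (Fin m → ℝ) → ℝ) : Prop :=
  ContDiff ℝ 2 w ∧ ZPer w ∧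
    ∀ y, lam = sq2 ((σ x y)ᵀ *ᵥ p)
        + 2 * ((τ y *ᵥ ((σ x y)ᵀ *ᵥ p)) ⬝ᵥ vgrad w y)
        + b y ⬝ᵥ vgrad w y
        + sq2 ((τ y)ᵀ *ᵥ vgrad w y)
        + Matrix.trace (τ y * (τ y)ᵀ * vhess w y)

/-- Classical solution of the supercritical cell problem at `(x, p)`. -/
def IsSupercriticalSol {n m r : ℕ}
    (σ : (Fin n → ℝ) → (Fin m → ℝ) → Matrix (Fin n) (Fin r) ℝ)
    (b : (Fin m → ℝ) → Fin m → ℝ)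
    (τ : (Fin m → ℝ) → Matrix (Fin m) (Fin r) ℝ)
    (x p : Fin n → ℝ) (lam : ℝ) (w : (Fin m → ℝ) → ℝ) : Prop :=
  ContDiff ℝ 2 w ∧ ZPer w ∧
    ∀ y, lam = sq2 ((σ x y)ᵀ *ᵥ p) + b y ⬝ᵥ vgrad w y
        + Matrix.trace (τ y * (τ y)ᵀ * vhess w y)

/-- Classical solution of the subcritical cell problem at `(x, p)`. -/
def IsSubcriticalSol {n m r : ℕ}
    (σ : (Fin n → ℝ) → (Fin m → ℝ) → Matrix (Fin n) (Fin r) ℝ)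
    (τ : (Fin m → ℝ) → Matrix (Fin m) (Fin r) ℝ)
    (x p : Fin n → ℝ) (lam : ℝ) (w : (Fin m → ℝ) → ℝ) : Prop :=
  ContDiff ℝ 1 w ∧ ZPer w ∧
    ∀ y, lam = sq2 ((τ y)ᵀ *ᵥ vgrad w y + (σ x y)ᵀ *ᵥ p)



open Filter Topology in
private lemma secderiv_nonpos (g : ℝ → ℝ) (hg : ContDiff ℝ 2 g) (hmax : ∀ s, g s ≤ g 0) :
    deriv (deriv g) 0 ≤ 0 := by
  by_contra hc
  push_neg at hc
  have hg' : ContDiff ℝ (1+1) g := by exact_mod_cast hg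
  have hd : Differentiable ℝ g := hg.differentiable (by norm_num)
  have hd1 : ContDiff ℝ 1 (deriv g) := (contDiff_succ_iff_deriv.mp hg').2.2
  have hloc : IsLocalMax g 0 := Filter.Eventually.of_forall hmax
  have h0 : deriv g 0 = 0 := hloc.deriv_eq_zero
  have hder : HasDerivAt (deriv g) (deriv (deriv g) 0) 0 :=
    ((hd1.differentiable (by norm_num)) 0).hasDerivAt
  have hslope : Tendsto (slope (deriv g) 0) (𝓝[≠] 0) (𝓝 (deriv (deriv g) 0)) :=
    hasDerivAt_iff_tendsto_slope.mp hder
  have hpos : ∀ᶠ s in 𝓝[≠] (0:ℝ), 0 < slope (deriv g) 0 s :=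
    hslope.eventually (eventually_gt_nhds hc)
  have hpos' : ∀ᶠ s in 𝓝[>] (0:ℝ), 0 < deriv g s := by
    have := hpos.filter_mono (nhdsWithin_mono 0 (fun x (hx : x ∈ Ioi 0) => ne_of_gt hx))
    filter_upwards [this, self_mem_nhdsWithin] with s hs hs'
    have heq : slope (deriv g) 0 s = deriv g s / s := by
      simp [slope, h0, div_eq_inv_mul]
    rw [heq] at hs
    have hs0 : 0 < s := hs'
    by_contra hneg
    push_neg at hneg
    have : deriv g s / s ≤ 0 := div_nonpos_of_nonpos_of_nonneg hneg hs0.le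
    linarith
  obtain ⟨u, hu, hsub⟩ := mem_nhdsGT_iff_exists_Ioo_subset.mp hpos'
  have hu0 : (0:ℝ) < u := hu
  have hmono : StrictMonoOn g (Icc 0 u) := by
    apply strictMonoOn_of_deriv_pos (convex_Icc 0 u) hd.continuous.continuousOn
    intro x hx
    rw [interior_Icc] at hx
    exact hsub hx
  have : g 0 < g (u/2) :=
    hmono (by constructor <;> nlinarith) (by constructor <;> nlinarith) (by nlinarith)
  exact absurd (hmax (u/2)) (not_le.mpr this)

private lemma exists_max' {m : ℕ} (v : (Fin m → ℝ) → ℝ) (hc : Continuous v)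
    (hp : ZPer v) : ∃ y₀, ∀ y, v y ≤ v y₀ := by
  have hK : IsCompact (Icc (0 : Fin m → ℝ) 1) := isCompact_Icc
  have hne : (Icc (0 : Fin m → ℝ) 1).Nonempty := ⟨0, by constructor <;> intro i <;> norm_num⟩
  obtain ⟨y₀, _, hy₀⟩ := hK.exists_isMaxOn hne hc.continuousOn
  refine ⟨y₀, fun y => ?_⟩
  have key : v y = v (fun i => Int.fract (y i)) := by
    have := hp y (fun i => -⌊y i⌋)
    rw [← this]
    congr 1
    funext i
    show y i + ((-⌊y i⌋ : ℤ) : ℝ) = Int.fract (y i)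
    rw [Int.fract]
    push_cast
    ring
  rw [key]
  apply hy₀
  constructor <;> intro i
  · exact Int.fract_nonneg _
  · exact (Int.fract_lt_one _).le

private lemma pd_contDiff {m : ℕ} {w : (Fin m → ℝ) → ℝ} (hw : ContDiff ℝ 2 w) (i : Fin m) :
    ContDiff ℝ 1 (pd w i) := by
  have h : ContDiff ℝ 1 (fderiv ℝ w) := hw.fderiv_right (by norm_num)
  exact h.clm_apply contDiff_const

private lemma vec_eq_sum_single {m : ℕ} (ξ : Fin m → ℝ) :
    ξ = ∑ i, ξ i • (Pi.single i 1 : Fin m → ℝ) := by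
  funext j
  rw [Finset.sum_apply]
  simp [Pi.single_apply]

private lemma fderiv_apply_eq_sum {m : ℕ} {w : (Fin m → ℝ) → ℝ} (y : Fin m → ℝ)
    (ξ : Fin m → ℝ) :
    fderiv ℝ w y ξ = ∑ i, ξ i * pd w i y := by
  conv_lhs => rw [vec_eq_sum_single ξ]
  rw [map_sum]
  simp [pd]

private lemma grad_zero_at_max {m : ℕ} {v : (Fin m → ℝ) → ℝ}
    {y₀ : Fin m → ℝ} (hmax : ∀ y, v y ≤ v y₀) (i : Fin m) : pd v i y₀ = 0 := by
  have hloc : IsLocalMax v y₀ := Filter.Eventually.of_forall hmax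
  have := hloc.fderiv_eq_zero
  simp [pd, this]

private lemma quad_nonpos_at_max {m : ℕ} {v : (Fin m → ℝ) → ℝ} (hv : ContDiff ℝ 2 v)
    {y₀ : Fin m → ℝ} (hmax : ∀ y, v y ≤ v y₀) (ξ : Fin m → ℝ) :
    ξ ⬝ᵥ (vhess v y₀ *ᵥ ξ) ≤ 0 := by
  set ℓ : ℝ → (Fin m → ℝ) := fun s => y₀ + s • ξ with hℓ
  have hℓd : ∀ s : ℝ, HasDerivAt ℓ ξ s := by
    intro s
    have h1 : HasDerivAt (fun s : ℝ => s • ξ) ((1:ℝ) • ξ) s := (hasDerivAt_id s).smul_const ξ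
    simpa [hℓ] using h1.const_add y₀
  have hℓc : ContDiff ℝ 2 ℓ := contDiff_const.add (contDiff_id.smul contDiff_const)
  set g : ℝ → ℝ := fun s => v (ℓ s) with hgdef
  have hg : ContDiff ℝ 2 g := hv.comp hℓc
  have hgmax : ∀ s, g s ≤ g 0 := by
    intro s
    have h0 : ℓ 0 = y₀ := by simp [hℓ]
    simp only [hgdef, h0]
    exact hmax _
  have hder1 : ∀ s, HasDerivAt g (∑ i, ξ i * pd v i (ℓ s)) s := by
    intro s
    have hd := ((hv.differentiable (by norm_num)) (ℓ s)).hasFDerivAt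
    have := hd.comp_hasDerivAt s (hℓd s)
    rwa [fderiv_apply_eq_sum (ℓ s) ξ] at this
  have hderiv_g : deriv g = fun s => ∑ i, ξ i * pd v i (ℓ s) := by
    funext s; exact (hder1 s).deriv
  have hder2 : HasDerivAt (fun s => ∑ i, ξ i * pd v i (ℓ s))
      (∑ i, ξ i * (∑ j, ξ j * pd (pd v i) j y₀)) 0 := by
    apply HasDerivAt.fun_sum
    intro i _
    have hpdc : Differentiable ℝ (pd v i) := (pd_contDiff hv i).differentiable (by norm_num)
    have hd := (hpdc (ℓ 0)).hasFDerivAt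
    have hcomp := hd.comp_hasDerivAt 0 (hℓd 0)
    have hℓ0 : ℓ 0 = y₀ := by simp [hℓ]
    rw [hℓ0, fderiv_apply_eq_sum y₀ ξ] at hcomp
    exact hcomp.const_mul (ξ i)
  have hsec : deriv (deriv g) 0 = ∑ i, ξ i * (∑ j, ξ j * pd (pd v i) j y₀) := by
    rw [hderiv_g]; exact hder2.deriv
  have hle := secderiv_nonpos g hg hgmax
  rw [hsec] at hle
  calc ξ ⬝ᵥ (vhess v y₀ *ᵥ ξ) = ∑ i, ξ i * (∑ j, ξ j * pd (pd v i) j y₀) := by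
        simp only [dotProduct, mulVec, vhess, Matrix.of_apply, dotProduct, Finset.mul_sum]
        rw [Finset.sum_comm]
        apply Finset.sum_congr rfl
        intro i _
        apply Finset.sum_congr rfl
        intro j _
        ring
    _ ≤ 0 := hle

private lemma sq2_nonneg {k : ℕ} (v : Fin k → ℝ) : 0 ≤ sq2 v := by
  simp only [sq2, dotProduct]
  exact Finset.sum_nonneg fun i _ => mul_self_nonneg _

private lemma sq2_convex {k : ℕ} (t : ℝ) (h0 : 0 ≤ t) (h1 : t ≤ 1) (a b : Fin k → ℝ) :
    sq2 (t • a + (1-t) • b) ≤ t * sq2 a + (1-t) * sq2 b := by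
  have hab : sq2 (a - b) = sq2 a - 2 * (a ⬝ᵥ b) + sq2 b := by
    simp only [sq2, dotProduct, Pi.sub_apply, Finset.mul_sum, ← Finset.sum_sub_distrib,
      ← Finset.sum_add_distrib]
    apply Finset.sum_congr rfl; intros; ring
  have hexp : sq2 (t • a + (1-t) • b)
      = t^2 * sq2 a + 2*t*(1-t)*(a ⬝ᵥ b) + (1-t)^2 * sq2 b := by
    simp [sq2, add_dotProduct, dotProduct_add, smul_dotProduct, dotProduct_smul,
      smul_eq_mul, dotProduct_comm b a]
    ring
  have key : 0 ≤ t*(1-t)*sq2 (a-b) :=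
    mul_nonneg (mul_nonneg h0 (by linarith)) (sq2_nonneg _)
  nlinarith [key, hab, hexp]

private lemma complete_sq {m r : ℕ} (T : Matrix (Fin m) (Fin r) ℝ) (u : Fin r → ℝ)
    (q : Fin m → ℝ) :
    sq2 u + 2*((T *ᵥ u) ⬝ᵥ q) + sq2 (Tᵀ *ᵥ q) = sq2 (Tᵀ *ᵥ q + u) := by
  have h1 : (T *ᵥ u) ⬝ᵥ q = (Tᵀ *ᵥ q) ⬝ᵥ u := by
    rw [dotProduct_comm, dotProduct_mulVec, mulVec_transpose]
  simp [sq2, dotProduct_add, add_dotProduct, h1, dotProduct_comm u]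
  ring

private lemma trace_form {m r : ℕ} (A : Matrix (Fin m) (Fin r) ℝ)
    (H : Matrix (Fin m) (Fin m) ℝ) :
    Matrix.trace (A * Aᵀ * H) = ∑ j, (fun i => A i j) ⬝ᵥ (H *ᵥ fun i => A i j) := by
  rw [Matrix.trace_mul_cycle, Matrix.trace_mul_comm]
  simp only [Matrix.trace, Matrix.diag, Matrix.mul_apply, Matrix.transpose_apply,
    dotProduct, Matrix.mulVec, Finset.mul_sum, Finset.sum_mul]

private lemma pd_comb {m : ℕ} {w w₁ w₂ : (Fin m → ℝ) → ℝ} (t : ℝ)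
    (hw : Differentiable ℝ w) (h1 : Differentiable ℝ w₁) (h2 : Differentiable ℝ w₂)
    (i : Fin m) (y : Fin m → ℝ) :
    pd (fun y => w y - t * w₁ y - (1-t) * w₂ y) i y
      = pd w i y - t * pd w₁ i y - (1-t) * pd w₂ i y := by
  have e1 : HasFDerivAt (fun y => w y - t * w₁ y - (1-t) * w₂ y)
      (fderiv ℝ w y - t • fderiv ℝ w₁ y - (1-t) • fderiv ℝ w₂ y) y :=
    (((hw y).hasFDerivAt.sub (((h1 y).hasFDerivAt).const_mul t)).sub
      (((h2 y).hasFDerivAt).const_mul (1-t)))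
  simp [pd, e1.fderiv]


/-- convexity in the momentum variable of the critical effective
Hamiltonian. -/
theorem stmt3 {n m r : ℕ}
    (σ : (Fin n → ℝ) → (Fin m → ℝ) → Matrix (Fin n) (Fin r) ℝ)
    (b : (Fin m → ℝ) → Fin m → ℝ)
    (τ : (Fin m → ℝ) → Matrix (Fin m) (Fin r) ℝ)
    (hyp : StandingHyp σ b τ)
    (xbar p₁ p₂ : Fin n → ℝ) (t : ℝ) (ht : t ∈ Set.Icc (0:ℝ) 1)
    (lam₁ lam₂ lam : ℝ) (w₁ w₂ w : (Fin m → ℝ) → ℝ)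
    (h₁ : IsCriticalSol σ b τ xbar p₁ lam₁ w₁)
    (h₂ : IsCriticalSol σ b τ xbar p₂ lam₂ w₂)
    (h : IsCriticalSol σ b τ xbar (t • p₁ + (1 - t) • p₂) lam w) :
    lam ≤ t * lam₁ + (1 - t) * lam₂ := by
  obtain ⟨ht0, ht1⟩ := ht
  obtain ⟨hw₁, hper₁, heq₁⟩ := h₁
  obtain ⟨hw₂, hper₂, heq₂⟩ := h₂
  obtain ⟨hw, hper, heq⟩ := h
  have hdw : Differentiable ℝ w := hw.differentiable (by norm_num)
  have hdw₁ : Differentiable ℝ w₁ := hw₁.differentiable (by norm_num)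
  have hdw₂ : Differentiable ℝ w₂ := hw₂.differentiable (by norm_num)
  set u : (Fin m → ℝ) → ℝ := fun y => w y - t * w₁ y - (1-t) * w₂ y with hu_def
  have hu : ContDiff ℝ 2 u :=
    (hw.sub (contDiff_const.mul hw₁)).sub (contDiff_const.mul hw₂)
  have huper : ZPer u := by
    intro y k
    simp only [hu_def, hper y k, hper₁ y k, hper₂ y k]
  obtain ⟨y₀, hy₀⟩ := exists_max' u hu.continuous huper
  have hgrad0 : ∀ i, pd u i y₀ = 0 := grad_zero_at_max hy₀
  -- gradient relation
  have hgrad : vgrad w y₀ = t • vgrad w₁ y₀ + (1-t) • vgrad w₂ y₀ := by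
    funext i
    have h0 := hgrad0 i
    rw [hu_def, pd_comb t hdw hdw₁ hdw₂ i y₀] at h0
    simp only [vgrad, Pi.add_apply, Pi.smul_apply, smul_eq_mul]
    linarith
  -- hessian relation
  have hpdu : ∀ j : Fin m, pd u j = fun y => pd w j y - t * pd w₁ j y - (1-t) * pd w₂ j y := by
    intro j; funext y; exact pd_comb t hdw hdw₁ hdw₂ j y
  have hhess : vhess u y₀ = vhess w y₀ - t • vhess w₁ y₀ - (1-t) • vhess w₂ y₀ := by
    ext i j
    have := pd_comb t ((pd_contDiff hw j).differentiable (by norm_num))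
      ((pd_contDiff hw₁ j).differentiable (by norm_num))
      ((pd_contDiff hw₂ j).differentiable (by norm_num)) i y₀
    simp only [vhess, Matrix.of_apply, Matrix.sub_apply, Matrix.smul_apply, smul_eq_mul]
    rw [hpdu j]
    exact this
  -- trace inequality
  have htr : Matrix.trace (τ y₀ * (τ y₀)ᵀ * vhess u y₀) ≤ 0 := by
    rw [trace_form]
    apply Finset.sum_nonpos
    intro j _
    exact quad_nonpos_at_max hu hy₀ _
  have htr_lin : Matrix.trace (τ y₀ * (τ y₀)ᵀ * vhess u y₀)
      = Matrix.trace (τ y₀ * (τ y₀)ᵀ * vhess w y₀)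
        - t * Matrix.trace (τ y₀ * (τ y₀)ᵀ * vhess w₁ y₀)
        - (1-t) * Matrix.trace (τ y₀ * (τ y₀)ᵀ * vhess w₂ y₀) := by
    rw [hhess]
    simp [Matrix.mul_sub, Matrix.trace_sub, Matrix.mul_smul, Matrix.trace_smul, smul_eq_mul]
  -- rewrite the equations using completion of the square
  set A := (σ xbar y₀)ᵀ with hA
  have hlam : lam = sq2 ((τ y₀)ᵀ *ᵥ vgrad w y₀ + A *ᵥ (t • p₁ + (1-t) • p₂))
      + b y₀ ⬝ᵥ vgrad w y₀ + Matrix.trace (τ y₀ * (τ y₀)ᵀ * vhess w y₀) := by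
    rw [heq y₀, ← complete_sq]
    ring
  have hlam₁ : lam₁ = sq2 ((τ y₀)ᵀ *ᵥ vgrad w₁ y₀ + A *ᵥ p₁)
      + b y₀ ⬝ᵥ vgrad w₁ y₀ + Matrix.trace (τ y₀ * (τ y₀)ᵀ * vhess w₁ y₀) := by
    rw [heq₁ y₀, ← complete_sq]
    ring
  have hlam₂ : lam₂ = sq2 ((τ y₀)ᵀ *ᵥ vgrad w₂ y₀ + A *ᵥ p₂)
      + b y₀ ⬝ᵥ vgrad w₂ y₀ + Matrix.trace (τ y₀ * (τ y₀)ᵀ * vhess w₂ y₀) := by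
    rw [heq₂ y₀, ← complete_sq]
    ring
  -- the argument vector is the convex combination
  have hz : (τ y₀)ᵀ *ᵥ vgrad w y₀ + A *ᵥ (t • p₁ + (1-t) • p₂)
      = t • ((τ y₀)ᵀ *ᵥ vgrad w₁ y₀ + A *ᵥ p₁)
        + (1-t) • ((τ y₀)ᵀ *ᵥ vgrad w₂ y₀ + A *ᵥ p₂) := by
    rw [hgrad]
    funext i
    simp [Matrix.mulVec_add, Matrix.mulVec_smul, Pi.add_apply, Pi.smul_apply, smul_eq_mul]
    ring
  have hb : b y₀ ⬝ᵥ vgrad w y₀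
      = t * (b y₀ ⬝ᵥ vgrad w₁ y₀) + (1-t) * (b y₀ ⬝ᵥ vgrad w₂ y₀) := by
    rw [hgrad]
    simp [dotProduct_add, dotProduct_smul, smul_eq_mul]
  have hconv := sq2_convex t ht0 ht1 ((τ y₀)ᵀ *ᵥ vgrad w₁ y₀ + A *ᵥ p₁)
    ((τ y₀)ᵀ *ᵥ vgrad w₂ y₀ + A *ᵥ p₂)
  rw [hz] at hlam
  rw [htr_lin] at htr
  rw [hlam, hlam₁, hlam₂, hb]
  nlinarith [hconv, htr]


end
end

section
/- If (λ, w) is a classical solution of the supercritical cell problem at (x, p) and (λ̄, w̄) is a classical solution of the supercritical cell problem at (x̄, p̄), then min_{y ∈ ℝ^m}(|σ(x,y)^T p|² − |σ(x̄,y)^T p̄|²) ≤ λ − λ̄ ≤ max_{y ∈ ℝ^m}(|σ(x,y)^T p|² − |σ(x̄,y)^T p̄|²). -/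
open Matrix MeasureTheory Set

noncomputable section

section AuxLemmas

open Filter Topology

lemma en_cont {k : ℕ} : Continuous fun v : Fin k → ℝ => en v := by
  unfold en dotProduct
  exact Real.continuous_sqrt.comp (continuous_finset_sum _ fun i _ =>
    (continuous_apply i).mul (continuous_apply i))

lemma en_zero {k : ℕ} : en (0 : Fin k → ℝ) = 0 := by
  simp [en, dotProduct]

lemma periodic_exists_max {m : ℕ} {f : (Fin m → ℝ) → ℝ} (hf : Continuous f) (hp : ZPer f) :
    ∃ z, ∀ y, f y ≤ f z := by
  obtain ⟨z, _, hmax⟩ := (isCompact_Icc (a := (0 : Fin m → ℝ)) (b := 1)).exists_isMaxOn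
    ⟨0, Set.mem_Icc.mpr ⟨le_refl 0, zero_le_one⟩⟩ hf.continuousOn
  refine ⟨z, fun y => ?_⟩
  have hy : (fun i => Int.fract (y i)) ∈ Set.Icc (0 : Fin m → ℝ) 1 :=
    ⟨fun i => Int.fract_nonneg _, fun i => (Int.fract_lt_one _).le⟩
  have hye : ((fun i => Int.fract (y i)) + fun i => ((⌊y i⌋ : ℤ) : ℝ)) = y := by
    funext i; simp [Int.fract_add_floor]
  have h2 : f y = f (fun i => Int.fract (y i)) := by
    have := hp (fun i => Int.fract (y i)) (fun i => ⌊y i⌋)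
    rw [hye] at this
    exact this
  rw [h2]
  exact hmax hy

lemma second_deriv_nonpos {g : ℝ → ℝ} (hg : ContDiff ℝ 2 g) (hmax : ∀ t, g t ≤ g 0) :
    deriv (deriv g) 0 ≤ 0 := by
  by_contra hpos
  push_neg at hpos
  have hg1 : ContDiff ℝ 1 (deriv g) := by
    have hd : deriv g = (ContinuousLinearMap.apply ℝ ℝ (1 : ℝ)) ∘ fderiv ℝ g := by
      funext t; rfl
    rw [hd]
    exact (ContinuousLinearMap.apply ℝ ℝ (1 : ℝ)).contDiff.comp
      (hg.fderiv_right (m := 1) (by norm_num))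
  have hcont2 : Continuous (deriv (deriv g)) := hg1.continuous_deriv le_rfl
  obtain ⟨δ, δpos, hδ⟩ : ∃ δ > 0, ∀ t : ℝ, |t| < δ → 0 < deriv (deriv g) t := by
    have hmem : {t : ℝ | 0 < deriv (deriv g) t} ∈ 𝓝 (0 : ℝ) :=
      (isOpen_lt continuous_const hcont2).mem_nhds hpos
    obtain ⟨δ, δpos, hδ⟩ := Metric.mem_nhds_iff.mp hmem
    exact ⟨δ, δpos, fun t ht => hδ (by simpa [Metric.mem_ball, Real.dist_eq] using ht)⟩
  have δ'pos : 0 < δ / 2 := by positivity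
  have hsub : ∀ t ∈ Set.Ioo (0 : ℝ) (δ / 2), 0 < deriv (deriv g) t := by
    intro t ht
    apply hδ
    rw [abs_of_pos ht.1]; linarith [ht.2]
  have hmono : StrictMonoOn (deriv g) (Set.Icc 0 (δ / 2)) :=
    strictMonoOn_of_deriv_pos (convex_Icc _ _) hg1.continuous.continuousOn
      (by rw [interior_Icc]; exact hsub)
  have h0 : deriv g 0 = 0 :=
    IsLocalMax.deriv_eq_zero (Filter.Eventually.of_forall hmax)
  have hgpos : ∀ t ∈ Set.Ioo (0 : ℝ) (δ / 2), 0 < deriv g t := by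
    intro t ht
    have := hmono (Set.left_mem_Icc.mpr δ'pos.le) ⟨ht.1.le, ht.2.le⟩ ht.1
    rwa [h0] at this
  have hmono2 : StrictMonoOn g (Set.Icc 0 (δ / 2)) :=
    strictMonoOn_of_deriv_pos (convex_Icc _ _) hg.continuous.continuousOn
      (by rw [interior_Icc]; exact hgpos)
  have hlt : g 0 < g (δ / 2) :=
    hmono2 (Set.left_mem_Icc.mpr δ'pos.le) (Set.right_mem_Icc.mpr δ'pos.le) δ'pos
  exact absurd (hmax (δ / 2)) (not_le.mpr hlt)

lemma fderiv_dir {m : ℕ} {v : (Fin m → ℝ) → ℝ} {y : Fin m → ℝ}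
    (hv : DifferentiableAt ℝ v y) (c : Fin m → ℝ) :
    fderiv ℝ v y c = ∑ i, c i * pd v i y := by
  conv_lhs => rw [← Finset.univ_sum_single c]
  rw [map_sum]
  refine Finset.sum_congr rfl fun i _ => ?_
  have hs : Pi.single i (c i) = c i • (Pi.single i (1 : ℝ) : Fin m → ℝ) := by
    rw [← Pi.single_smul, smul_eq_mul, mul_one]
  rw [hs, ContinuousLinearMap.map_smul, smul_eq_mul]
  rfl

lemma pd_contDiff_s9 {m : ℕ} {v : (Fin m → ℝ) → ℝ} (hv : ContDiff ℝ 2 v) (j : Fin m) :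
    ContDiff ℝ 1 (pd v j) := by
  have hd : pd v j = (ContinuousLinearMap.apply ℝ ℝ (Pi.single j 1)) ∘ fderiv ℝ v := by
    funext y; simp [pd, Function.comp]
  rw [hd]
  exact (ContinuousLinearMap.apply ℝ ℝ (Pi.single j (1 : ℝ))).contDiff.comp
    (hv.fderiv_right (m := 1) (by norm_num))

lemma pd_sub {m : ℕ} {w wbar : (Fin m → ℝ) → ℝ} (hw : Differentiable ℝ w)
    (hwbar : Differentiable ℝ wbar) (j : Fin m) (y : Fin m → ℝ) :
    pd (fun y => w y - wbar y) j y = pd w j y - pd wbar j y := by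
  unfold pd
  rw [fderiv_fun_sub (hw y) (hwbar y)]
  simp

lemma quad_nonpos {m : ℕ} {v : (Fin m → ℝ) → ℝ} (hv : ContDiff ℝ 2 v) {z : Fin m → ℝ}
    (hz : ∀ y, v y ≤ v z) (c : Fin m → ℝ) :
    ∑ j, c j * ∑ i, c i * pd (pd v j) i z ≤ 0 := by
  have hvd : Differentiable ℝ v := hv.differentiable (by norm_num)
  set φ : ℝ → (Fin m → ℝ) := fun t => z + t • c with hφdef
  have hφ : ∀ t : ℝ, HasDerivAt φ c t := by
    intro t
    simpa only [one_smul, id, hφdef] using ((hasDerivAt_id t).smul_const c).const_add z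
  have hg' : ∀ t, HasDerivAt (v ∘ φ) (fderiv ℝ v (φ t) c) t := fun t =>
    (hvd (φ t)).hasFDerivAt.comp_hasDerivAt t (hφ t)
  have hderiv : deriv (v ∘ φ) = fun t => fderiv ℝ v (φ t) c := funext fun t => (hg' t).deriv
  have hu : ContDiff ℝ 1 (fun y => fderiv ℝ v y c) := by
    have hd : (fun y => fderiv ℝ v y c) = (ContinuousLinearMap.apply ℝ ℝ c) ∘ fderiv ℝ v := by
      funext y; simp [Function.comp]
    rw [hd]
    exact (ContinuousLinearMap.apply ℝ ℝ c).contDiff.comp (hv.fderiv_right (m := 1) (by norm_num))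
  have hg2 : ContDiff ℝ 2 (v ∘ φ) :=
    hv.comp (contDiff_const.add (contDiff_id.smul contDiff_const))
  have hmax : ∀ t, (v ∘ φ) t ≤ (v ∘ φ) 0 := by
    intro t
    have hz0 : φ 0 = z := by simp [hφdef]
    simpa [Function.comp, hz0] using hz (φ t)
  have key := second_deriv_nonpos hg2 hmax
  have h2 : HasDerivAt (deriv (v ∘ φ)) (fderiv ℝ (fun y => fderiv ℝ v y c) z c) 0 := by
    rw [hderiv]
    have hud : DifferentiableAt ℝ (fun y => fderiv ℝ v y c) (φ 0) :=
      (hu.differentiable one_ne_zero) _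
    have := hud.hasFDerivAt.comp_hasDerivAt 0 (hφ 0)
    simpa [Function.comp_def, hφdef] using this
  have hquad : deriv (deriv (v ∘ φ)) 0 = ∑ j, c j * ∑ i, c i * pd (pd v j) i z := by
    rw [h2.deriv]
    have hexp : (fun y => fderiv ℝ v y c) = fun y => ∑ j, c j * pd v j y := by
      funext y; exact fderiv_dir (hvd y) c
    rw [hexp]
    have hs : HasFDerivAt (fun y => ∑ j, c j * pd v j y)
        (∑ j, c j • fderiv ℝ (pd v j) z) z := by
      apply HasFDerivAt.fun_sum
      intro j _
      exact (((pd_contDiff_s9 hv j).differentiable one_ne_zero) z).hasFDerivAt.const_mul (c j)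
    rw [hs.fderiv, ContinuousLinearMap.sum_apply]
    refine Finset.sum_congr rfl fun j _ => ?_
    rw [ContinuousLinearMap.smul_apply, smul_eq_mul]
    congr 1
    exact fderiv_dir (((pd_contDiff_s9 hv j).differentiable one_ne_zero) z) c
  rw [← hquad]
  exact key

lemma trace_quad {m r : ℕ} (M : Matrix (Fin m) (Fin r) ℝ) (H : Matrix (Fin m) (Fin m) ℝ) :
    Matrix.trace (M * Mᵀ * H) = ∑ k, ∑ j, M j k * ∑ i, M i k * H i j := by
  have h1 : Matrix.trace (M * Mᵀ * H) = ∑ i, ∑ j, (∑ k, M i k * M j k) * H j i := by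
    simp [Matrix.trace, Matrix.diag, Matrix.mul_apply, Matrix.transpose_apply]
  have h2 : ∀ i j : Fin m, (∑ k, M i k * M j k) * H j i = ∑ k, M i k * (M j k * H j i) := by
    intro i j
    rw [Finset.sum_mul]
    exact Finset.sum_congr rfl fun k _ => by ring
  calc Matrix.trace (M * Mᵀ * H)
      = ∑ i, ∑ j, ∑ k, M i k * (M j k * H j i) := by
        rw [h1]
        exact Finset.sum_congr rfl fun i _ => Finset.sum_congr rfl fun j _ => h2 i j
    _ = ∑ i, ∑ k, ∑ j, M i k * (M j k * H j i) :=
        Finset.sum_congr rfl fun i _ => Finset.sum_comm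
    _ = ∑ k, ∑ i, ∑ j, M i k * (M j k * H j i) := Finset.sum_comm
    _ = ∑ k, ∑ j, M j k * ∑ i, M i k * H i j := by
        refine Finset.sum_congr rfl fun k _ => Finset.sum_congr rfl fun j _ => ?_
        rw [Finset.mul_sum]

lemma key_ineq {n m r : ℕ}
    (σ : (Fin n → ℝ) → (Fin m → ℝ) → Matrix (Fin n) (Fin r) ℝ)
    (b : (Fin m → ℝ) → Fin m → ℝ)
    (τ : (Fin m → ℝ) → Matrix (Fin m) (Fin r) ℝ)
    (x xbar p pbar : Fin n → ℝ) (lam lambar : ℝ) (w wbar : (Fin m → ℝ) → ℝ)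
    (h : IsSupercriticalSol σ b τ x p lam w)
    (hbar : IsSupercriticalSol σ b τ xbar pbar lambar wbar) :
    ∃ z, lam - lambar ≤ sq2 ((σ x z)ᵀ *ᵥ p) - sq2 ((σ xbar z)ᵀ *ᵥ pbar) := by
  obtain ⟨hw, hwper, hweq⟩ := h
  obtain ⟨hwb, hwbper, hwbeq⟩ := hbar
  have hv : ContDiff ℝ 2 (fun y => w y - wbar y) := hw.sub hwb
  have hvper : ZPer (fun y => w y - wbar y) := by
    intro y k
    simp only
    rw [hwper, hwbper]
  obtain ⟨z, hz⟩ := periodic_exists_max hv.continuous hvper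
  have hlocmax : IsLocalMax (fun y => w y - wbar y) z := Filter.Eventually.of_forall hz
  have hfz : fderiv ℝ (fun y => w y - wbar y) z = 0 := hlocmax.fderiv_eq_zero
  have hwd : Differentiable ℝ w := hw.differentiable (by norm_num)
  have hwbd : Differentiable ℝ wbar := hwb.differentiable (by norm_num)
  have hgrad : vgrad w z = vgrad wbar z := by
    funext i
    have h1 : pd (fun y => w y - wbar y) i z = 0 := by
      unfold pd; rw [hfz]; rfl
    have h2 := pd_sub hwd hwbd i z
    show pd w i z = pd wbar i z
    rw [h2] at h1
    linarith
  have hhess : vhess (fun y => w y - wbar y) z = vhess w z - vhess wbar z := by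
    ext i j
    have hpdj : pd (fun y => w y - wbar y) j = fun y => pd w j y - pd wbar j y := by
      funext y; exact pd_sub hwd hwbd j y
    simp only [vhess, Matrix.sub_apply, Matrix.of_apply]
    rw [hpdj]
    exact pd_sub ((pd_contDiff_s9 hw j).differentiable one_ne_zero)
      ((pd_contDiff_s9 hwb j).differentiable one_ne_zero) i z
  have htr : Matrix.trace (τ z * (τ z)ᵀ * vhess (fun y => w y - wbar y) z) ≤ 0 := by
    rw [trace_quad]
    apply Finset.sum_nonpos
    intro k _
    have hq := quad_nonpos hv hz (fun i => τ z i k)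
    simpa [vhess] using hq
  refine ⟨z, ?_⟩
  have e1 := hweq z
  have e2 := hwbeq z
  have hb : b z ⬝ᵥ vgrad w z = b z ⬝ᵥ vgrad wbar z := by rw [hgrad]
  have htr2 : Matrix.trace (τ z * (τ z)ᵀ * vhess w z)
      - Matrix.trace (τ z * (τ z)ᵀ * vhess wbar z) ≤ 0 := by
    rw [← Matrix.trace_sub, ← Matrix.mul_sub, ← hhess]
    exact htr
  linarith

lemma sigma_cont {n m r : ℕ}
    {σ : (Fin n → ℝ) → (Fin m → ℝ) → Matrix (Fin n) (Fin r) ℝ}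
    {b : (Fin m → ℝ) → Fin m → ℝ}
    {τ : (Fin m → ℝ) → Matrix (Fin m) (Fin r) ℝ}
    (hyp : StandingHyp σ b τ) (x : Fin n → ℝ) (i : Fin n) (j : Fin r) :
    Continuous fun y => σ x y i j := by
  obtain ⟨L, hL⟩ := hyp.σ_lip
  rw [continuous_iff_continuousAt]
  intro y
  unfold ContinuousAt
  rw [← tendsto_sub_nhds_zero_iff]
  apply squeeze_zero_norm (a := fun y' => L * (en (x - x) + en (y' - y)))
  · intro y'
    rw [Real.norm_eq_abs]
    exact hL x x y' y i j
  · have hc : Continuous fun y' : Fin m → ℝ => L * (en (x - x) + en (y' - y)) :=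
      continuous_const.mul (continuous_const.add
        (en_cont.comp (continuous_id.sub continuous_const)))
    have := hc.tendsto y
    simpa [sub_self, en_zero] using this

lemma F_cont {n m r : ℕ}
    {σ : (Fin n → ℝ) → (Fin m → ℝ) → Matrix (Fin n) (Fin r) ℝ}
    {b : (Fin m → ℝ) → Fin m → ℝ}
    {τ : (Fin m → ℝ) → Matrix (Fin m) (Fin r) ℝ}
    (hyp : StandingHyp σ b τ) (x p : Fin n → ℝ) :
    Continuous fun y => sq2 ((σ x y)ᵀ *ᵥ p) := by
  have hrw : (fun y => sq2 ((σ x y)ᵀ *ᵥ p))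
      = fun y => ∑ k, (∑ i, σ x y i k * p i) * (∑ i, σ x y i k * p i) := by
    funext y
    simp [sq2, dotProduct, Matrix.mulVec, Matrix.transpose_apply]
  rw [hrw]
  exact continuous_finset_sum _ fun k _ =>
    (continuous_finset_sum _ fun i _ => (sigma_cont hyp x i k).mul continuous_const).mul
      (continuous_finset_sum _ fun i _ => (sigma_cont hyp x i k).mul continuous_const)

end AuxLemmas

/-- the difference of two supercritical effective Hamiltonian values is
sandwiched between the (attained) min and max of `|σ(x,y)ᵀp|² − |σ(x̄,y)ᵀp̄|²` over `y`. -/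
theorem stmt9 {n m r : ℕ}
    (σ : (Fin n → ℝ) → (Fin m → ℝ) → Matrix (Fin n) (Fin r) ℝ)
    (b : (Fin m → ℝ) → Fin m → ℝ)
    (τ : (Fin m → ℝ) → Matrix (Fin m) (Fin r) ℝ)
    (hyp : StandingHyp σ b τ)
    (x xbar p pbar : Fin n → ℝ) (lam lambar : ℝ) (w wbar : (Fin m → ℝ) → ℝ)
    (h : IsSupercriticalSol σ b τ x p lam w)
    (hbar : IsSupercriticalSol σ b τ xbar pbar lambar wbar) :
    ∃ y₀ y₁ : Fin m → ℝ,
      (∀ y, sq2 ((σ x y₀)ᵀ *ᵥ p) - sq2 ((σ xbar y₀)ᵀ *ᵥ pbar)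
          ≤ sq2 ((σ x y)ᵀ *ᵥ p) - sq2 ((σ xbar y)ᵀ *ᵥ pbar)) ∧
      (∀ y, sq2 ((σ x y)ᵀ *ᵥ p) - sq2 ((σ xbar y)ᵀ *ᵥ pbar)
          ≤ sq2 ((σ x y₁)ᵀ *ᵥ p) - sq2 ((σ xbar y₁)ᵀ *ᵥ pbar)) ∧
      sq2 ((σ x y₀)ᵀ *ᵥ p) - sq2 ((σ xbar y₀)ᵀ *ᵥ pbar) ≤ lam - lambar ∧
      lam - lambar ≤ sq2 ((σ x y₁)ᵀ *ᵥ p) - sq2 ((σ xbar y₁)ᵀ *ᵥ pbar) := by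

  have hFc : Continuous fun y => sq2 ((σ x y)ᵀ *ᵥ p) - sq2 ((σ xbar y)ᵀ *ᵥ pbar) :=
    (F_cont hyp x p).sub (F_cont hyp xbar pbar)
  have hFper : ZPer fun y => sq2 ((σ x y)ᵀ *ᵥ p) - sq2 ((σ xbar y)ᵀ *ᵥ pbar) := by
    intro y k
    simp only
    rw [hyp.σ_per, hyp.σ_per]
  obtain ⟨y₁, hy₁'⟩ := periodic_exists_max hFc hFper
  have hy₁ : ∀ y, sq2 ((σ x y)ᵀ *ᵥ p) - sq2 ((σ xbar y)ᵀ *ᵥ pbar)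
      ≤ sq2 ((σ x y₁)ᵀ *ᵥ p) - sq2 ((σ xbar y₁)ᵀ *ᵥ pbar) := hy₁'
  have hGper : ZPer fun y => -(sq2 ((σ x y)ᵀ *ᵥ p) - sq2 ((σ xbar y)ᵀ *ᵥ pbar)) := by
    intro y k
    simp only
    rw [hyp.σ_per, hyp.σ_per]
  obtain ⟨y₀, hy₀'⟩ := periodic_exists_max hFc.neg hGper
  have hy₀ : ∀ y, sq2 ((σ x y₀)ᵀ *ᵥ p) - sq2 ((σ xbar y₀)ᵀ *ᵥ pbar)
      ≤ sq2 ((σ x y)ᵀ *ᵥ p) - sq2 ((σ xbar y)ᵀ *ᵥ pbar) := by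
    intro y
    have := hy₀' y
    simp only [Pi.neg_apply] at this
    linarith
  obtain ⟨z, hzle⟩ := key_ineq σ b τ x xbar p pbar lam lambar w wbar h hbar
  obtain ⟨z', hz'le⟩ := key_ineq σ b τ xbar x pbar p lambar lam wbar w hbar h
  refine ⟨y₀, y₁, hy₀, hy₁, ?_, ?_⟩
  · have h1 := hy₀ z'
    linarith
  · have h1 := hy₁ z
    linarith

end
end
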